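/- Deterministic core of the 1/e-approximation guarantee: let γ be a natural number with γ ≥ 1, let s ∈ ℝ with s ≥ 0, and let a : ℕ → ℝ satisfy a(0) ≥ 0 and, for every i ≥ 1, a(i) ≥ a(i−1) + ((1 − 1/γ)^(i−1)·s − a(i−1))/γ. Then a(γ) ≥ e^(−1)·s. -/

import Mathlib

lemma exp_neg_one_le_pow (γ : ℕ) (hγ : 1 ≤ γ) :
    Real.exp (-1) ≤ (1 - 1 / (γ : ℝ)) ^ (γ - 1) := by
  rcases eq_or_lt_of_le hγ with h1 | h2
  · have hγ1 : γ = 1 := h1.symm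
    subst hγ1
    have : Real.exp (-1) ≤ 1 := Real.exp_le_one_iff.2 (by norm_num)
    simpa using this
  · have hγ2 : 2 ≤ γ := h2
    have hn : (0:ℝ) < (γ:ℝ) - 1 := by
      have : (2:ℝ) ≤ (γ:ℝ) := by exact_mod_cast hγ2
      linarith
    have hγpos : (0:ℝ) < (γ:ℝ) := by linarith
    have hstep : Real.exp (-(1 / ((γ:ℝ) - 1))) ≤ 1 - 1 / (γ:ℝ) := by
      have h := Real.add_one_le_exp (1 / ((γ:ℝ) - 1))
      have hpos : (0:ℝ) < Real.exp (1 / ((γ:ℝ) - 1)) := Real.exp_pos _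
      rw [Real.exp_neg]
      rw [inv_le_iff_one_le_mul₀ hpos]
      have : (1 - 1/(γ:ℝ)) * (1/((γ:ℝ)-1) + 1) = 1 := by field_simp; ring
      calc (1:ℝ) = (1 - 1/(γ:ℝ)) * (1/((γ:ℝ)-1) + 1) := this.symm
        _ ≤ (1 - 1/(γ:ℝ)) * Real.exp (1/((γ:ℝ)-1)) := by
            apply mul_le_mul_of_nonneg_left h
            have : 1/(γ:ℝ) ≤ 1 := by
              rw [div_le_one hγpos]; linarith
            linarith
    have hexp0 : (0:ℝ) ≤ Real.exp (-(1 / ((γ:ℝ) - 1))) := (Real.exp_pos _).le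
    calc Real.exp (-1) = Real.exp (-(1 / ((γ:ℝ) - 1))) ^ (γ - 1) := by
          rw [← Real.exp_nat_mul]
          congr 1
          have hcast : ((γ - 1 : ℕ) : ℝ) = (γ:ℝ) - 1 := by
            push_cast [Nat.cast_sub hγ]; ring
          rw [hcast]
          field_simp
      _ ≤ (1 - 1 / (γ : ℝ)) ^ (γ - 1) := pow_le_pow_left₀ hexp0 hstep _

/-- Deterministic core of the `1/e`-approximation guarantee of the randomized greedy
pattern-selection algorithm: if `s ≥ 0`, `a 0 ≥ 0`, and
`a i ≥ a (i-1) + ((1 - 1/γ)^(i-1) · s - a (i-1)) / γ` for all `i ≥ 1`, then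
`a γ ≥ e⁻¹ · s`. -/
theorem greedy_one_over_e_approx (γ : ℕ) (hγ : 1 ≤ γ) (s : ℝ) (hs : 0 ≤ s) (a : ℕ → ℝ)
    (h0 : 0 ≤ a 0)
    (hrec : ∀ i : ℕ, 1 ≤ i →
      a i ≥ a (i - 1) + ((1 - 1 / (γ : ℝ)) ^ (i - 1) * s - a (i - 1)) / (γ : ℝ)) :
    a γ ≥ Real.exp (-1) * s := by
  have hγR : (1:ℝ) ≤ (γ:ℝ) := by exact_mod_cast hγ
  have hγpos : (0:ℝ) < (γ:ℝ) := by linarith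
  have hq : (0:ℝ) ≤ 1 - 1/(γ:ℝ) := by
    rw [sub_nonneg, div_le_one hγpos]; exact hγR
  have claim : ∀ i : ℕ, ((i:ℝ)/(γ:ℝ)) * (1 - 1/(γ:ℝ))^(i-1) * s ≤ a i := by
    intro i
    induction i with
    | zero => simpa using h0
    | succ n ih =>
      have hrec' := hrec (n+1) (Nat.le_add_left 1 n)
      simp only [Nat.add_sub_cancel] at hrec'
      have key : a n * (1 - 1/(γ:ℝ)) + (1 - 1/(γ:ℝ))^n * s / (γ:ℝ) ≤ a (n+1) := by
        have heq : a n + ((1 - 1/(γ:ℝ))^n * s - a n)/(γ:ℝ)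
            = a n * (1 - 1/(γ:ℝ)) + (1 - 1/(γ:ℝ))^n * s / (γ:ℝ) := by
          field_simp; ring
        linarith [heq ▸ hrec']
      rcases Nat.eq_zero_or_pos n with hn0 | hn1
      · subst hn0
        simp only [Nat.cast_one, Nat.add_sub_cancel] at *
        have : 0 ≤ a 0 * (1 - 1/(γ:ℝ)) := mul_nonneg h0 hq
        simp only [pow_zero] at *
        have hid : 1 * s / (γ:ℝ) = 1/(γ:ℝ) * 1 * s := by ring
        push_cast
        linarith [hid ▸ key, this]
      · have hmul : ((n:ℝ)/(γ:ℝ)) * (1 - 1/(γ:ℝ))^n * s ≤ a n * (1 - 1/(γ:ℝ)) := by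
          have hp : (1 - 1/(γ:ℝ))^(n-1) * (1 - 1/(γ:ℝ)) = (1 - 1/(γ:ℝ))^n := by
            rw [← pow_succ, Nat.sub_add_cancel hn1]
          calc ((n:ℝ)/(γ:ℝ)) * (1 - 1/(γ:ℝ))^n * s
              = (((n:ℝ)/(γ:ℝ)) * (1 - 1/(γ:ℝ))^(n-1) * s) * (1 - 1/(γ:ℝ)) := by
                rw [← hp]; ring
            _ ≤ a n * (1 - 1/(γ:ℝ)) := mul_le_mul_of_nonneg_right ih hq
        simp only [Nat.add_sub_cancel]
        have hid : ((n:ℝ)/(γ:ℝ)) * (1 - 1/(γ:ℝ))^n * s + (1 - 1/(γ:ℝ))^n * s / (γ:ℝ)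
            = (((n:ℝ)+1)/(γ:ℝ)) * (1 - 1/(γ:ℝ))^n * s := by ring
        push_cast
        linarith [key, hmul, hid]
  have hfin := claim γ
  have : ((γ:ℝ)/(γ:ℝ)) = 1 := div_self (ne_of_gt hγpos)
  rw [this, one_mul] at hfin
  have hle : Real.exp (-1) * s ≤ (1 - 1/(γ:ℝ))^(γ-1) * s :=
    mul_le_mul_of_nonneg_right (exp_neg_one_le_pow γ hγ) hs
  linarith
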